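/- Suppose n ≥ t ≥ 2 are integers and k is a field such that (pd(R/I_t(L_n)) − 1)·(⌊t/2⌋ + 1) < n − t, where R = k[x_1,…,x_n]. Then there does not exist a good partition of the generators of I_t(L_n). -/
import Mathlib


open MvPolynomial CategoryTheory

/-- The projective dimension (in `ℕ∞`) of an `R`-module `M`: the least `n` such that `M`
admits a projective resolution vanishing in homological degrees `> n`. -/
noncomputable def projDimN (R : Type) [CommRing R] (M : Type) [AddCommGroup M] [Module R M] : ℕ∞ :=
  sInf {n : ℕ∞ | ∃ P : ProjectiveResolution (ModuleCat.of R M),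
    ∀ i : ℕ, n < (i : ℕ∞) → Limits.IsZero (P.complex.X i)}

/-- The arithmetical rank of an ideal `I`: the least number of elements generating `I`
up to radical. -/
noncomputable def araI {R : Type} [CommRing R] (I : Ideal R) : ℕ :=
  sInf {s : ℕ | ∃ f : Fin s → R, Ideal.radical (Ideal.span (Set.range f)) = Ideal.radical I}

open Classical in
/-- The projective dimension of an ideal, with the convention `pd (0) = -1`. -/
noncomputable def pdIdealZ {R : Type} [CommRing R] (I : Ideal R) : WithTop ℤ :=
  if I = ⊥ then -1 else (projDimN R I).map (fun n : ℕ => (n : ℤ))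

section Line

variable (K : Type) [Field K]

/-- The monomial `x_{i+1} x_{i+2} ⋯ x_{i+t}` (on `0`-indexed variables, the product
`X i ⋯ X (i+t-1)`), corresponding to a directed path of length `t` in the line graph
`L_n`. -/
noncomputable def lineMon (n t i : ℕ) (h : i + t ≤ n) : MvPolynomial (Fin n) K :=
  ∏ j : Fin t, X (⟨i + j, by omega⟩ : Fin n)

/-- The set of minimal monomial generators of the path ideal `I_t(L_n)`. -/
def lineGens (n t : ℕ) : Set (MvPolynomial (Fin n) K) :=
  {m | ∃ (i : ℕ) (h : i + t ≤ n), m = lineMon K n t i h}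

/-- The path ideal `I_t(L_n)` of the line graph `L_n`. -/
noncomputable def linePathIdeal (n t : ℕ) : Ideal (MvPolynomial (Fin n) K) :=
  Ideal.span (lineGens K n t)

/-- A good partition `P_0, …, P_r` of the generators of `I_t(L_n)`: a partition of
`G(I_t(L_n))` with `r + 1 = pd(R/I_t(L_n))`, such that `P_0` is a singleton and any two
distinct elements `p, p'` of a part `P_i` with `0 < i ≤ r` admit an element of an earlier
part `P_{i'}`, `i' < i`, dividing `p * p'`. -/
def IsGoodPartition (n t : ℕ) (r : ℕ) (P : ℕ → Set (MvPolynomial (Fin n) K)) : Prop :=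
  ((r : ℕ∞) + 1 =
      projDimN (MvPolynomial (Fin n) K) (MvPolynomial (Fin n) K ⧸ linePathIdeal K n t)) ∧
  (∀ i ≤ r, ∀ j ≤ r, i ≠ j → Disjoint (P i) (P j)) ∧
  (⋃ i ≤ r, P i) = lineGens K n t ∧
  (∃ p, P 0 = {p}) ∧
  (∀ i, 0 < i → i ≤ r → ∀ p ∈ P i, ∀ p' ∈ P i, p ≠ p' →
    ∃ i' < i, ∃ q ∈ P i', q ∣ p * p')

end Line


section AuxLemmas

open MvPolynomial

variable (K : Type) [Field K]

lemma prodX_eq_monomial {σ ι : Type*} (s : Finset ι) (f : ι → σ) :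
    (∏ j ∈ s, (X (f j) : MvPolynomial σ K)) =
      monomial (∑ j ∈ s, Finsupp.single (f j) 1) 1 := by
  induction s using Finset.cons_induction with
  | empty => simp
  | cons a s ha ih =>
      rw [Finset.prod_cons, Finset.sum_cons, ih, X, monomial_mul, one_mul]

/-- The exponent vector of `lineMon`. -/
noncomputable def DD (n t a : ℕ) (h : a + t ≤ n) : Fin n →₀ ℕ :=
  ∑ j : Fin t, Finsupp.single (⟨a + j, by omega⟩ : Fin n) 1

lemma lineMon_eq_monomial (n t a : ℕ) (h : a + t ≤ n) :
    lineMon K n t a h = monomial (DD n t a h) 1 := by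
  rw [lineMon, DD, prodX_eq_monomial]

lemma DD_apply (n t a : ℕ) (h : a + t ≤ n) (j : ℕ) (hj : j < n) :
    DD n t a h ⟨j, hj⟩ = if a ≤ j ∧ j < a + t then 1 else 0 := by
  rw [DD, Finsupp.finset_sum_apply]
  simp only [Finsupp.single_apply, Fin.ext_iff]
  split_ifs with hx
  · rw [Finset.sum_eq_single (⟨j - a, by omega⟩ : Fin t)]
    · rw [if_pos]; simp; omega
    · intro b _ hb
      have hb' : (b : ℕ) ≠ j - a := fun e => hb (Fin.ext e)
      exact if_neg (by omega)
    · simp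
  · apply Finset.sum_eq_zero
    intro b _
    have := b.isLt
    exact if_neg (by omega)

lemma lineMon_inj (n t a b : ℕ) (ht : 1 ≤ t) (ha : a + t ≤ n) (hb : b + t ≤ n)
    (hab : a ≠ b) : lineMon K n t a ha ≠ lineMon K n t b hb := by
  intro e
  rw [lineMon_eq_monomial, lineMon_eq_monomial,
    monomial_left_inj (one_ne_zero : (1 : K) ≠ 0)] at e
  rcases Nat.lt_or_ge a b with hlt | hge
  · have h2 := DFunLike.congr_fun e (⟨a, by omega⟩ : Fin n)
    rw [DD_apply, DD_apply, if_pos (by omega), if_neg (by omega)] at h2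
    exact one_ne_zero h2
  · have hlt : b < a := by omega
    have h2 := DFunLike.congr_fun e (⟨b, by omega⟩ : Fin n)
    rw [DD_apply, DD_apply, if_neg (by omega), if_pos (by omega)] at h2
    exact one_ne_zero h2.symm

lemma dvd_interval (n t a b l : ℕ) (ha : a + t ≤ n) (hb : b + t ≤ n) (hl : l + t ≤ n)
    (hdvd : lineMon K n t l hl ∣ lineMon K n t a ha * lineMon K n t b hb) :
    ∀ j, l ≤ j → j < l + t → (a ≤ j ∧ j < a + t) ∨ (b ≤ j ∧ j < b + t) := by
  rw [lineMon_eq_monomial, lineMon_eq_monomial, lineMon_eq_monomial, monomial_mul,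
    monomial_dvd_monomial] at hdvd
  obtain ⟨h1, -⟩ := hdvd
  rcases h1 with h1 | h1
  · exact absurd (by simpa using h1) (one_ne_zero : (1 : K) ≠ 0)
  · intro j hj1 hj2
    have hx := h1 (⟨j, by omega⟩ : Fin n)
    rw [Finsupp.add_apply, DD_apply, DD_apply, DD_apply] at hx
    split_ifs at hx <;> omega

/-- Pure arithmetic: interval covering lemma. -/
lemma intervalC (t a b l : ℕ) (ht : 2 ≤ t) (hla : l ≠ a) (hlb : l ≠ b) (hab : a < b)
    (H : ∀ j, l ≤ j → j < l + t → (a ≤ j ∧ j < a + t) ∨ (b ≤ j ∧ j < b + t)) :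
    a + 2 ≤ b ∧ b ≤ a + t := by
  have h1 := H l (le_refl l) (by omega)
  have h2 := H (l + t - 1) (by omega) (by omega)
  by_cases hc : l ≤ a + t ∧ a + t < l + t
  · have h3 := H (a + t) hc.1 hc.2
    omega
  · omega

/-- Card bound: a set of naturals pairwise at distance between `2` and `t` has at most
`t/2 + 1` elements. -/
lemma cardB (t : ℕ) (s : Finset ℕ)
    (hs : ∀ a ∈ s, ∀ b ∈ s, a < b → a + 2 ≤ b ∧ b ≤ a + t) : s.card ≤ t / 2 + 1 := by
  classical
  rcases s.eq_empty_or_nonempty with rfl | hne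
  · simp
  set m := s.min' hne with hm
  have hmem := s.min'_mem hne
  have hge : ∀ a ∈ s, m ≤ a := fun a ha => s.min'_le a ha
  have hle : ∀ a ∈ s, a ≤ m + t := by
    intro a ha
    rcases eq_or_lt_of_le (hge a ha) with e | hlt
    · omega
    · exact (hs m hmem a ha hlt).2
  have hinj : Set.InjOn (fun a => (a - m) / 2) ↑s := by
    intro a ha b hb hab
    simp only at hab
    rcases lt_trichotomy a b with hlt | e | hlt
    · have := (hs a ha b hb hlt).1
      have := hge a ha
      omega
    · exact e
    · have := (hs b hb a ha hlt).1
      have := hge b hb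
      omega
  calc s.card = (s.image (fun a => (a - m) / 2)).card := (Finset.card_image_of_injOn hinj).symm
    _ ≤ (Finset.range (t / 2 + 1)).card := by
        apply Finset.card_le_card
        intro x hx
        simp only [Finset.mem_image] at hx
        obtain ⟨a, ha, rfl⟩ := hx
        have := hge a ha
        have := hle a ha
        simp only [Finset.mem_range]
        omega
    _ = t / 2 + 1 := Finset.card_range _

end AuxLemmas

/-- If `n ≥ t ≥ 2` are such that
`(pd(R/I_t(L_n)) - 1) * (⌊t/2⌋ + 1) < n - t`, then there is no good partition of the
generators of `I_t(L_n)`. -/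
theorem no_goodPartition_of_small_projDim
    (n t : ℕ) (ht : 2 ≤ t) (htn : t ≤ n) (K : Type) [Field K]
    (h : (projDimN (MvPolynomial (Fin n) K)
        (MvPolynomial (Fin n) K ⧸ linePathIdeal K n t) - 1) * ((t / 2 + 1 : ℕ) : ℕ∞) <
      ((n - t : ℕ) : ℕ∞)) :
    ¬ ∃ (r : ℕ) (P : ℕ → Set (MvPolynomial (Fin n) K)), IsGoodPartition K n t r P :=  by
  rintro ⟨r, P, hpd, hdisj, hcover, ⟨p0, hP0⟩, hgood⟩
  classical
  -- From the hypothesis we get `r * (t/2 + 1) < n - t`.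
  have h' : r * (t / 2 + 1) < n - t := by
    rw [← hpd] at h
    have e : (r : ℕ∞) + 1 - 1 = (r : ℕ∞) := by
      exact_mod_cast rfl
    rw [e] at h
    exact_mod_cast h
  set M : ℕ → MvPolynomial (Fin n) K :=
    fun a => if h : a + t ≤ n then lineMon K n t a h else 0 with hMdef
  have hM : ∀ (a : ℕ) (ha : a + t ≤ n), M a = lineMon K n t a ha := fun a ha => dif_pos ha
  set A : ℕ → Finset ℕ :=
    fun i => (Finset.range (n - t + 1)).filter (fun a => M a ∈ P i) with hAdef
  -- every index lands in some part
  have hsub : Finset.range (n - t + 1) ⊆ (Finset.range (r + 1)).biUnion A := by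
    intro a ha
    have ha' := Finset.mem_range.mp ha
    have hat : a + t ≤ n := by omega
    have hmem : M a ∈ lineGens K n t := ⟨a, hat, hM a hat⟩
    rw [← hcover] at hmem
    simp only [Set.mem_iUnion] at hmem
    obtain ⟨i, hi, hPi⟩ := hmem
    exact Finset.mem_biUnion.mpr ⟨i, Finset.mem_range.mpr (by omega),
      Finset.mem_filter.mpr ⟨ha, hPi⟩⟩
  have hcard : n - t + 1 ≤ ∑ i ∈ Finset.range (r + 1), (A i).card :=
    calc n - t + 1 = (Finset.range (n - t + 1)).card := (Finset.card_range _).symm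
      _ ≤ ((Finset.range (r + 1)).biUnion A).card := Finset.card_le_card hsub
      _ ≤ ∑ i ∈ Finset.range (r + 1), (A i).card := Finset.card_biUnion_le
  -- the zeroth part accounts for at most one index
  have hA0 : (A 0).card ≤ 1 := by
    apply Finset.card_le_one.mpr
    intro a ha b hb
    simp only [hAdef, Finset.mem_filter, Finset.mem_range] at ha hb
    have hat : a + t ≤ n := by omega
    have hbt : b + t ≤ n := by omega
    by_contra hab
    have hne : M a ≠ M b := by
      rw [hM a hat, hM b hbt]
      exact lineMon_inj K n t a b (by omega) hat hbt hab
    apply hne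
    have h1 : M a = p0 := by have := ha.2; rw [hP0] at this; exact this
    have h2 : M b = p0 := by have := hb.2; rw [hP0] at this; exact this
    rw [h1, h2]
  -- each later part accounts for at most `t/2 + 1` indices
  have hAi : ∀ i, 1 ≤ i → i ≤ r → (A i).card ≤ t / 2 + 1 := by
    intro i hi1 hir
    apply cardB
    intro a ha b hb hab
    simp only [hAdef, Finset.mem_filter, Finset.mem_range] at ha hb
    have hat : a + t ≤ n := by omega
    have hbt : b + t ≤ n := by omega
    have hne : M a ≠ M b := by
      rw [hM a hat, hM b hbt]
      exact lineMon_inj K n t a b (by omega) hat hbt (by omega)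
    obtain ⟨i', hi'lt, q, hq, hdvd⟩ := hgood i hi1 hir (M a) ha.2 (M b) hb.2 hne
    have hq' : q ∈ lineGens K n t := by
      rw [← hcover]
      exact Set.mem_iUnion.mpr ⟨i', Set.mem_iUnion.mpr ⟨by omega, hq⟩⟩
    obtain ⟨l, hlt2, rfl⟩ := hq'
    have hdisj' := hdisj i' (by omega) i hir (by omega)
    have hqni : lineMon K n t l hlt2 ∉ P i := fun hmem => Set.disjoint_left.mp hdisj' hq hmem
    have hla : l ≠ a := by
      rintro rfl
      exact hqni ((hM l hlt2) ▸ ha.2)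
    have hlb : l ≠ b := by
      rintro rfl
      exact hqni ((hM l hlt2) ▸ hb.2)
    rw [hM a hat, hM b hbt] at hdvd
    exact intervalC t a b l ht hla hlb hab
      (dvd_interval K n t a b l hat hbt hlt2 hdvd)
  have hsum : ∑ i ∈ Finset.range (r + 1), (A i).card ≤ 1 + r * (t / 2 + 1) := by
    rw [Finset.sum_range_succ']
    have hrest : ∑ i ∈ Finset.range r, (A (i + 1)).card ≤ r * (t / 2 + 1) := by
      calc ∑ i ∈ Finset.range r, (A (i + 1)).card
          ≤ ∑ _i ∈ Finset.range r, (t / 2 + 1) :=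
            Finset.sum_le_sum (fun i hi =>
              hAi (i + 1) (by omega) (by have := Finset.mem_range.mp hi; omega))
        _ = r * (t / 2 + 1) := by rw [Finset.sum_const, Finset.card_range, smul_eq_mul]
    omega
  omega
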